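/- Let d ≥ 3 be an integer and ρ > 0. Then there exists a constant c > 0 such that for every h = (h_1, …, h_d) with 0 < h_j < 1/2 for all j and h_1 h_2 ≤ (∏_{j=3}^d h_j)^{2/(d−2)}, setting δ_1 = h_1 h_2, δ_2 = (∏_{j=3}^d h_j)^{2/(d−2)}, and D = max( −(2/ρ) log(∏_{j=1}^d h_j), 1 ), the following holds: δ_1/∏_{l=1}^d h_l + (|log δ_1| + |log δ_2|)/∏_{j=3}^d h_j + δ_2 + δ_2^{1 − d/2} + D + (∏_{j=1}^d h_j)^{−2} e^{−ρ D} ≤ c · (∑_{j=1}^d |log h_j|) / ∏_{j=3}^d h_j. -/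

import Mathlib

set_option maxHeartbeats 1000000 in
/-- Parameter-optimization step of the variance bound: for `d ≥ 3`
and mixing rate `ρ > 0` there is a constant `c > 0` such that for bandwidths
`0 < h_j < 1/2` with `h_1 h_2 ≤ (∏_{j≥3} h_j)^{2/(d−2)}`, with `δ₁ = h_1 h_2`,
`δ₂ = (∏_{j≥3} h_j)^{2/(d−2)}` and `D = max(−(2/ρ) log ∏_j h_j, 1)`, the quantity
`δ₁/∏_l h_l + (|log δ₁| + |log δ₂|)/∏_{j≥3} h_j + δ₂ + δ₂^{1−d/2} + D
+ (∏_j h_j)^{−2} e^{−ρD}` is at most `c (∑_j |log h_j|)/∏_{j≥3} h_j`. -/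
theorem stmt18 (d : ℕ) (hd : 3 ≤ d) (ρ : ℝ) (hρ : 0 < ρ) :
    ∃ c > 0, ∀ h : ℕ → ℝ,
      (∀ j ∈ Finset.Icc 1 d, 0 < h j ∧ h j < 1 / 2) →
      h 1 * h 2 ≤ (∏ j ∈ Finset.Icc 3 d, h j) ^ ((2 : ℝ) / ((d : ℝ) - 2)) →
      ∀ δ1 δ2 D : ℝ,
        δ1 = h 1 * h 2 →
        δ2 = (∏ j ∈ Finset.Icc 3 d, h j) ^ ((2 : ℝ) / ((d : ℝ) - 2)) →
        D = max (-(2 / ρ) * Real.log (∏ j ∈ Finset.Icc 1 d, h j)) 1 →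
        δ1 / (∏ l ∈ Finset.Icc 1 d, h l)
            + (|Real.log δ1| + |Real.log δ2|) / (∏ j ∈ Finset.Icc 3 d, h j)
            + δ2 + δ2 ^ (1 - (d : ℝ) / 2) + D
            + (∏ j ∈ Finset.Icc 1 d, h j) ^ (-(2 : ℝ)) * Real.exp (-ρ * D)
          ≤ c * (∑ j ∈ Finset.Icc 1 d, |Real.log (h j)|)
              / ∏ j ∈ Finset.Icc 3 d, h j := by
  refine ⟨8 + 2 / ρ, by positivity, ?_⟩
  intro h hh _ δ1 δ2 D hδ1 hδ2 hD
  set Q := ∏ j ∈ Finset.Icc 3 d, h j with hQdef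
  set P := ∏ j ∈ Finset.Icc 1 d, h j with hPdef
  set S := ∑ j ∈ Finset.Icc 1 d, |Real.log (h j)| with hSdef
  clear_value Q P S
  have hd3 : (3 : ℝ) ≤ (d : ℝ) := by exact_mod_cast hd
  have hdm2 : ((d : ℝ) - 2) ≠ 0 := by linarith
  have hpos : ∀ j ∈ Finset.Icc 1 d, 0 < h j := fun j hj => (hh j hj).1
  have hsub : Finset.Icc 3 d ⊆ Finset.Icc 1 d := by
    intro x hx; simp only [Finset.mem_Icc] at *; omega
  have hQ : 0 < Q := by
    rw [hQdef]; exact Finset.prod_pos (fun j hj => hpos j (hsub hj))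
  have hP : 0 < P := by rw [hPdef]; exact Finset.prod_pos hpos
  have hQ1 : Q ≤ 1 := by
    rw [hQdef]
    exact Finset.prod_le_one (fun j hj => (hpos j (hsub hj)).le)
      (fun j hj => by linarith [(hh j (hsub hj)).2])
  have h1m : (1 : ℕ) ∈ Finset.Icc 1 d := by simp only [Finset.mem_Icc]; omega
  have h2m : (2 : ℕ) ∈ Finset.Icc 1 d := by simp only [Finset.mem_Icc]; omega
  have hh1 : 0 < h 1 := hpos 1 h1m
  have hh2 : 0 < h 2 := hpos 2 h2m
  have hIcc : Finset.Icc 1 d = insert 1 (insert 2 (Finset.Icc 3 d)) := by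
    ext x; simp only [Finset.mem_Icc, Finset.mem_insert]; omega
  have h1ni : (1 : ℕ) ∉ insert 2 (Finset.Icc 3 d) := by
    simp only [Finset.mem_insert, Finset.mem_Icc]; omega
  have h2ni : (2 : ℕ) ∉ Finset.Icc 3 d := by
    simp only [Finset.mem_Icc]; omega
  have hPQ : P = h 1 * (h 2 * Q) := by
    rw [hPdef, hQdef, hIcc, Finset.prod_insert h1ni, Finset.prod_insert h2ni]
  have hSsplit : S = |Real.log (h 1)| + (|Real.log (h 2)| +
      ∑ j ∈ Finset.Icc 3 d, |Real.log (h j)|) := by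
    rw [hSdef, hIcc, Finset.sum_insert h1ni, Finset.sum_insert h2ni]
  -- each |log h j| ≥ log 2
  have hterm : ∀ j ∈ Finset.Icc 1 d, Real.log 2 ≤ |Real.log (h j)| := by
    intro j hj
    have hj1 : 0 < h j := (hh j hj).1
    have hj2 : h j ≤ 1 / 2 := (hh j hj).2.le
    have hlog : Real.log (h j) ≤ Real.log (1 / 2) := Real.log_le_log hj1 hj2
    have : Real.log (1 / 2) = -Real.log 2 := by
      rw [one_div, Real.log_inv]
    rw [this] at hlog
    have h2pos : (0:ℝ) < Real.log 2 := Real.log_pos one_lt_two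
    calc Real.log 2 ≤ -Real.log (h j) := by linarith
      _ ≤ |Real.log (h j)| := neg_le_abs _
  have hS2 : 2 ≤ S := by
    rw [hSdef]
    have hsum : (Finset.Icc 1 d).card • Real.log 2 ≤
        ∑ j ∈ Finset.Icc 1 d, |Real.log (h j)| :=
      Finset.card_nsmul_le_sum _ _ _ hterm
    have hcard : (Finset.Icc 1 d).card = d := by
      rw [Nat.card_Icc]; omega
    rw [hcard, nsmul_eq_mul] at hsum
    have hl2 : (0.6931471803 : ℝ) < Real.log 2 := Real.log_two_gt_d9
    have : (3 : ℝ) * Real.log 2 ≤ (d : ℝ) * Real.log 2 := by nlinarith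
    nlinarith
  have hS1 : (1 : ℝ) ≤ S := by linarith
  have hS0 : (0 : ℝ) ≤ S := by linarith
  have hSQ : S ≤ S / Q := by
    rw [le_div_iff₀ hQ]; nlinarith
  have hSQ1 : (1 : ℝ) ≤ S / Q := le_trans hS1 hSQ
  -- |log Q| ≤ S
  have hlogQ : |Real.log Q| ≤ S := by
    rw [hQdef, hSdef]
    have hprod : Real.log (∏ j ∈ Finset.Icc 3 d, h j)
        = ∑ j ∈ Finset.Icc 3 d, Real.log (h j) :=
      Real.log_prod (fun j hj => (hpos j (hsub hj)).ne')
    rw [hprod]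
    calc |∑ j ∈ Finset.Icc 3 d, Real.log (h j)|
        ≤ ∑ j ∈ Finset.Icc 3 d, |Real.log (h j)| := Finset.abs_sum_le_sum_abs _ _
      _ ≤ ∑ j ∈ Finset.Icc 1 d, |Real.log (h j)| :=
          Finset.sum_le_sum_of_subset_of_nonneg hsub (fun j _ _ => abs_nonneg _)
  -- |log P| ≤ S
  have hlogP : |Real.log P| ≤ S := by
    rw [hPdef, hSdef]
    have hprod : Real.log (∏ j ∈ Finset.Icc 1 d, h j)
        = ∑ j ∈ Finset.Icc 1 d, Real.log (h j) :=
      Real.log_prod (fun j hj => (hpos j hj).ne')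
    rw [hprod]
    exact Finset.abs_sum_le_sum_abs _ _
  -- Term 1 : δ1 / P = 1 / Q ≤ S / Q
  have hT1 : δ1 / P ≤ S / Q := by
    have : δ1 / P = 1 / Q := by
      rw [hδ1, hPQ]; field_simp
    rw [this, div_le_div_iff_of_pos_right hQ]; linarith
  -- Term 2 : (|log δ1| + |log δ2|) / Q ≤ 3 S / Q
  have hld1 : |Real.log δ1| ≤ S := by
    rw [hδ1, Real.log_mul hh1.ne' hh2.ne']
    have hsum3 : (0:ℝ) ≤ ∑ j ∈ Finset.Icc 3 d, |Real.log (h j)| :=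
      Finset.sum_nonneg (fun j _ => abs_nonneg _)
    calc |Real.log (h 1) + Real.log (h 2)|
        ≤ |Real.log (h 1)| + |Real.log (h 2)| := abs_add_le _ _
      _ ≤ S := by rw [hSsplit]; linarith
  have hld2 : |Real.log δ2| ≤ 2 * S := by
    rw [hδ2, Real.log_rpow hQ]
    have he0 : (0:ℝ) ≤ 2 / ((d:ℝ) - 2) := div_nonneg (by norm_num) (by linarith)
    have he2 : 2 / ((d:ℝ) - 2) ≤ 2 := by
      rw [div_le_iff₀ (by linarith : (0:ℝ) < (d:ℝ) - 2)]; linarith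
    rw [abs_mul, abs_of_nonneg he0]
    nlinarith [abs_nonneg (Real.log Q)]
  have hT2 : (|Real.log δ1| + |Real.log δ2|) / Q ≤ 3 * S / Q := by
    rw [show (3:ℝ) * S / Q = 3 * S / Q from rfl, div_le_div_iff_of_pos_right hQ]; linarith
  -- Term 3 : δ2 ≤ 1 ≤ S / Q
  have hT3 : δ2 ≤ S / Q := by
    have : δ2 ≤ 1 := by
      rw [hδ2]
      exact Real.rpow_le_one hQ.le hQ1 (div_nonneg (by norm_num) (by linarith))
    linarith
  -- Term 4 : δ2 ^ (1 - d/2) = 1/Q ≤ S/Q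
  have hT4 : δ2 ^ (1 - (d:ℝ)/2) ≤ S / Q := by
    have hexp : (2 : ℝ) / ((d:ℝ) - 2) * (1 - (d:ℝ)/2) = -1 := by
      rw [div_mul_eq_mul_div, div_eq_iff hdm2]; ring
    have : δ2 ^ (1 - (d:ℝ)/2) = 1 / Q := by
      rw [hδ2, ← Real.rpow_mul hQ.le, hexp, Real.rpow_neg_one, one_div]
    rw [this, div_le_div_iff_of_pos_right hQ]; linarith
  -- Term 5 : D ≤ (2/ρ + 1) S / Q
  have hT5 : D ≤ (2 / ρ + 1) * S / Q := by
    have ha : -(2 / ρ) * Real.log P ≤ (2 / ρ) * S := by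
      have h1 : -Real.log P ≤ S := le_trans (neg_le_abs _) hlogP
      have h2 : (0:ℝ) ≤ 2 / ρ := by positivity
      have h3 := mul_le_mul_of_nonneg_left h1 h2
      linarith [h3]
    have hDle : D ≤ (2 / ρ + 1) * S := by
      rw [hD]
      have h2 : (0:ℝ) < 2 / ρ := div_pos two_pos hρ
      apply max_le
      · nlinarith
      · nlinarith
    calc D ≤ (2 / ρ + 1) * S := hDle
      _ ≤ (2 / ρ + 1) * S / Q := by
          rw [le_div_iff₀ hQ]
          have : (0:ℝ) ≤ (2/ρ + 1) * S := by positivity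
          nlinarith
  -- Term 6 : P^(-2) exp(-ρ D) ≤ 1 ≤ S/Q
  have hT6 : P ^ (-(2:ℝ)) * Real.exp (-ρ * D) ≤ S / Q := by
    have hDge : -(2 / ρ) * Real.log P ≤ D := by rw [hD]; exact le_max_left _ _
    have hexp : -ρ * D ≤ 2 * Real.log P := by
      have := mul_le_mul_of_nonneg_left hDge hρ.le
      have heq : ρ * (-(2 / ρ) * Real.log P) = -2 * Real.log P := by
        field_simp
      rw [heq] at this
      linarith
    have hexp2 : Real.exp (-ρ * D) ≤ P ^ (2:ℝ) := by
      have : Real.exp (-ρ * D) ≤ Real.exp (2 * Real.log P) := Real.exp_le_exp.2 hexp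
      have h2 : Real.exp (2 * Real.log P) = P ^ (2:ℝ) := by
        rw [Real.rpow_def_of_pos hP]; ring_nf
      linarith [h2 ▸ this]
    have hone : P ^ (-(2:ℝ)) * Real.exp (-ρ * D) ≤ 1 := by
      have hnn : (0:ℝ) ≤ P ^ (-(2:ℝ)) := Real.rpow_nonneg hP.le _
      calc P ^ (-(2:ℝ)) * Real.exp (-ρ * D) ≤ P ^ (-(2:ℝ)) * P ^ (2:ℝ) :=
            mul_le_mul_of_nonneg_left hexp2 hnn
        _ = 1 := by rw [← Real.rpow_add hP]; norm_num
    linarith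
  have hfinal : S / Q + 3 * S / Q + S / Q + S / Q + (2 / ρ + 1) * S / Q + S / Q
      = (8 + 2 / ρ) * S / Q := by ring
  linarith
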